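/- For M ≠ 0, the kernel g_M(t,s) (Green's function of u''+Mu'=σ, u(0)=u'(1)=0) satisfies: for every continuous σ : [0,1] → ℝ, the function u(t) = ∫₀¹ g_M(t,s)σ(s) ds is twice continuously differentiable on [0,1] and satisfies u''(t) + M·u'(t) = σ(t) for all t ∈ [0,1], with u(0) = 0 and u'(1) = 0. -/

import Mathlib

open Set intervalIntegral

theorem stmt_12 (M : ℝ) (hM : M ≠ 0) (g : ℝ → ℝ → ℝ)
    (hg : ∀ t s : ℝ, g t s =
      if s ≤ t then (1 - Real.exp (M * s)) / M
      else Real.exp (M * s) * (Real.exp (-(M * t)) - 1) / M)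
    (σ : ℝ → ℝ) (hσ : ContinuousOn σ (Set.Icc 0 1)) :
    ∃ u' u'' : ℝ → ℝ,
      (∀ t ∈ Set.Icc (0:ℝ) 1,
        HasDerivAt (fun τ => ∫ s in (0:ℝ)..1, g τ s * σ s) (u' t) t) ∧
      (∀ t ∈ Set.Icc (0:ℝ) 1, HasDerivAt u' (u'' t) t) ∧
      ContinuousOn u' (Set.Icc 0 1) ∧
      ContinuousOn u'' (Set.Icc 0 1) ∧
      (∀ t ∈ Set.Icc (0:ℝ) 1, u'' t + M * u' t = σ t) ∧
      (∫ s in (0:ℝ)..1, g 0 s * σ s) = 0 ∧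
      u' 1 = 0 := by
  -- extension of σ to all of ℝ
  set σ' : ℝ → ℝ := fun s => σ (max 0 (min 1 s)) with hσ'def
  have hσ'eq : ∀ s ∈ Set.Icc (0:ℝ) 1, σ' s = σ s := by
    intro s hs; simp only [hσ'def]; rw [min_eq_right hs.2, max_eq_right hs.1]
  have hσ'cont : Continuous σ' := by
    apply hσ.comp_continuous (continuous_const.max (continuous_const.min continuous_id))
    intro x
    exact ⟨le_max_left _ _, max_le zero_le_one (min_le_left _ _)⟩
  -- exponential helper
  have hee : ∀ x : ℝ, Real.exp (-(M*x)) * Real.exp (M*x) = 1 := by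
    intro x; rw [← Real.exp_add]; simp
  -- integrand pieces
  set f₁ : ℝ → ℝ := fun s => (1 - Real.exp (M*s))/M * σ' s with hf₁def
  set f₂ : ℝ → ℝ := fun s => Real.exp (M*s) * σ' s with hf₂def
  have hf₁c : Continuous f₁ := by fun_prop
  have hf₂c : Continuous f₂ := by fun_prop
  set V : ℝ → ℝ := fun t => ∫ s in t..1, f₂ s with hVdef
  have hVd : ∀ t : ℝ, HasDerivAt V (-(f₂ t)) t := by
    intro t
    have hW : HasDerivAt (fun t => ∫ s in (1:ℝ)..t, f₂ s) (f₂ t) t :=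
      intervalIntegral.integral_hasDerivAt_right (hf₂c.intervalIntegrable _ _)
        (hf₂c.stronglyMeasurableAtFilter _ _) hf₂c.continuousAt
    have hVW : V = fun t => -∫ s in (1:ℝ)..t, f₂ s := by
      funext t
      simp only [hVdef]
      exact intervalIntegral.integral_symm 1 t
    rw [hVW]; exact hW.neg
  have hVcont : Continuous V := continuous_iff_continuousAt.mpr fun t => (hVd t).continuousAt
  -- the candidates
  set u' : ℝ → ℝ := fun t => -Real.exp (-(M*t)) * V t with hu'def
  set u'' : ℝ → ℝ := fun t => σ' t - M * u' t with hu''def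
  have hE : ∀ t : ℝ, HasDerivAt (fun τ => Real.exp (-(M*τ))) (-M * Real.exp (-(M*t))) t := by
    intro t
    have h1 : HasDerivAt (fun τ : ℝ => -(M*τ)) (-M) t := by
      simpa using ((hasDerivAt_id t).const_mul (-M))
    simpa [mul_comm] using h1.exp
  have hu'd : ∀ t : ℝ, HasDerivAt u' (u'' t) t := by
    intro t
    have h := ((hE t).neg.mul (hVd t))
    refine h.congr_deriv (Eq.symm ?_)
    simp only [hu''def, hu'def, hf₂def, Pi.neg_apply]
    linear_combination (-(σ' t)) * hee t
  have hu'cont : Continuous u' := by fun_prop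
  have hu''cont : Continuous u'' := by fun_prop
  -- Φ : smooth formula agreeing with u on [0,1]
  set A : ℝ → ℝ := fun t => ∫ s in (0:ℝ)..t, f₁ s with hAdef
  set Φ : ℝ → ℝ := fun t => A t + (Real.exp (-(M*t)) - 1)/M * V t with hΦdef
  have hAd : ∀ t : ℝ, HasDerivAt A (f₁ t) t := by
    intro t
    exact intervalIntegral.integral_hasDerivAt_right (hf₁c.intervalIntegrable _ _)
      (hf₁c.stronglyMeasurableAtFilter _ _) hf₁c.continuousAt
  have hB : ∀ t : ℝ, HasDerivAt (fun τ => (Real.exp (-(M*τ)) - 1)/M)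
      (-Real.exp (-(M*t))) t := by
    intro t
    have h := ((hE t).sub_const 1).div_const M
    refine h.congr_deriv (Eq.symm ?_)
    field_simp
  have hΦd : ∀ t : ℝ, HasDerivAt Φ (u' t) t := by
    intro t
    have h := (hAd t).add ((hB t).mul (hVd t))
    refine h.congr_deriv (Eq.symm ?_)
    simp only [hu'def, hf₁def, hf₂def]
    linear_combination (σ' t / M) * hee t
  -- u = Φ on [0,1]
  have hEq : ∀ τ ∈ Set.Icc (0:ℝ) 1, (∫ s in (0:ℝ)..1, g τ s * σ s) = Φ τ := by
    intro τ hτ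
    have huIcc1 : Set.uIcc (0:ℝ) τ = Set.Icc 0 τ := Set.uIcc_of_le hτ.1
    have huIcc2 : Set.uIcc τ (1:ℝ) = Set.Icc τ 1 := Set.uIcc_of_le hτ.2
    have heq1 : ∀ s ∈ Set.uIcc (0:ℝ) τ, g τ s * σ s = f₁ s := by
      intro s hs
      rw [huIcc1] at hs
      have hs01 : s ∈ Set.Icc (0:ℝ) 1 := ⟨hs.1, hs.2.trans hτ.2⟩
      rw [hg, if_pos hs.2]
      simp only [hf₁def]
      rw [hσ'eq s hs01]
    have heq2 : ∀ s ∈ Set.uIcc τ (1:ℝ), g τ s * σ s =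
        (Real.exp (-(M*τ)) - 1)/M * f₂ s := by
      intro s hs
      rw [huIcc2] at hs
      have hs01 : s ∈ Set.Icc (0:ℝ) 1 := ⟨hτ.1.trans hs.1, hs.2⟩
      rw [hg]
      simp only [hf₂def, hσ'eq s hs01]
      split_ifs with h
      · have hsτ : s = τ := le_antisymm h hs.1
        subst hsτ
        linear_combination (-(σ s)/M) * hee s
      · ring
    have hint1 : IntervalIntegrable (fun s => g τ s * σ s) MeasureTheory.volume 0 τ :=
      (hf₁c.continuousOn.congr heq1).intervalIntegrable
    have hint2 : IntervalIntegrable (fun s => g τ s * σ s) MeasureTheory.volume τ 1 := by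
      have hc : Continuous fun s => (Real.exp (-(M*τ)) - 1)/M * f₂ s := by fun_prop
      exact (hc.continuousOn.congr heq2).intervalIntegrable
    rw [← intervalIntegral.integral_add_adjacent_intervals hint1 hint2,
      intervalIntegral.integral_congr heq1, intervalIntegral.integral_congr heq2,
      intervalIntegral.integral_const_mul]
  -- u on Iic 0
  set C₀ : ℝ := V 0 with hC₀def
  have huIic : ∀ τ : ℝ, τ ≤ 0 → (∫ s in (0:ℝ)..1, g τ s * σ s) =
      (Real.exp (-(M*τ)) - 1)/M * C₀ := by
    intro τ hτ
    have heq : ∀ s ∈ Set.uIcc (0:ℝ) 1, g τ s * σ s =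
        (Real.exp (-(M*τ)) - 1)/M * f₂ s := by
      intro s hs
      rw [Set.uIcc_of_le zero_le_one] at hs
      rw [hg]
      simp only [hf₂def, hσ'eq s hs]
      split_ifs with h
      · have h0 : s = 0 := le_antisymm (h.trans hτ) hs.1
        have hτ0 : τ = 0 := le_antisymm hτ (h0 ▸ h)
        subst h0; subst hτ0; simp
      · ring
    rw [intervalIntegral.integral_congr heq, intervalIntegral.integral_const_mul]
  -- u on Ici 1
  have huIci : ∀ τ : ℝ, 1 ≤ τ → (∫ s in (0:ℝ)..1, g τ s * σ s) = A 1 := by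
    intro τ hτ
    have heq : ∀ s ∈ Set.uIcc (0:ℝ) 1, g τ s * σ s = f₁ s := by
      intro s hs
      rw [Set.uIcc_of_le zero_le_one] at hs
      rw [hg, if_pos (hs.2.trans hτ)]
      simp only [hf₁def]
      rw [hσ'eq s hs]
    exact intervalIntegral.integral_congr heq
  have hu'1 : u' 1 = 0 := by
    simp [hu'def, hVdef, intervalIntegral.integral_same]
  -- main derivative claim
  have hmain : ∀ t ∈ Set.Icc (0:ℝ) 1,
      HasDerivAt (fun τ => ∫ s in (0:ℝ)..1, g τ s * σ s) (u' t) t := by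
    intro t ht
    have h1 : HasDerivWithinAt (fun τ => ∫ s in (0:ℝ)..1, g τ s * σ s) (u' t)
        (Set.Icc 0 1) t :=
      ((hΦd t).hasDerivWithinAt).congr hEq (hEq t ht)
    rcases eq_or_lt_of_le ht.1 with h0 | h0
    · -- t = 0
      subst h0
      have hR : HasDerivWithinAt (fun τ => ∫ s in (0:ℝ)..1, g τ s * σ s) (u' 0)
          (Set.Ici 0) 0 :=
        h1.mono_of_mem_nhdsWithin (Icc_mem_nhdsGE_of_mem ⟨le_rfl, zero_lt_one⟩)
      have hψ : HasDerivAt (fun τ => (Real.exp (-(M*τ)) - 1)/M * C₀)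
          (-Real.exp (-(M*0)) * C₀) 0 := (hB 0).mul_const C₀
      have hval : -Real.exp (-(M*0)) * C₀ = u' 0 := by
        simp only [hu'def, hC₀def]
      have hL : HasDerivWithinAt (fun τ => ∫ s in (0:ℝ)..1, g τ s * σ s) (u' 0)
          (Set.Iic 0) 0 := by
        rw [← hval]
        exact hψ.hasDerivWithinAt.congr (fun τ hτ => huIic τ hτ) (huIic 0 le_rfl)
      have h := hL.union hR
      rw [Set.Iic_union_Ici, hasDerivWithinAt_univ] at h
      exact h
    rcases eq_or_lt_of_le ht.2 with h1' | h1'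
    · -- t = 1
      subst h1'
      have hL : HasDerivWithinAt (fun τ => ∫ s in (0:ℝ)..1, g τ s * σ s) (u' 1)
          (Set.Iic 1) 1 :=
        h1.mono_of_mem_nhdsWithin (Icc_mem_nhdsLE_of_mem ⟨zero_lt_one, le_rfl⟩)
      have hR : HasDerivWithinAt (fun τ => ∫ s in (0:ℝ)..1, g τ s * σ s) (u' 1)
          (Set.Ici 1) 1 := by
        rw [hu'1]
        exact (hasDerivWithinAt_const 1 _ (A 1)).congr (fun τ hτ => huIci τ hτ)
          (huIci 1 le_rfl)
      have h := hL.union hR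
      rw [Set.Iic_union_Ici, hasDerivWithinAt_univ] at h
      exact h
    · exact h1.hasDerivAt (Icc_mem_nhds h0 h1')
  refine ⟨u', u'', hmain, fun t _ => hu'd t, hu'cont.continuousOn, hu''cont.continuousOn,
    fun t ht => ?_, ?_, hu'1⟩
  · simp only [hu''def]
    rw [hσ'eq t ht]; ring
  · have heq : ∀ s ∈ Set.uIcc (0:ℝ) 1, g 0 s * σ s = (0:ℝ) := by
      intro s hs
      rw [Set.uIcc_of_le zero_le_one] at hs
      rw [hg]
      split_ifs with h
      · have : s = 0 := le_antisymm h hs.1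
        subst this; simp
      · simp
    rw [intervalIntegral.integral_congr heq]
    simp
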